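/- If θ ∈ (0,1) is irrational with continued fraction expansion [2n, a₂, a₃, ...] (n ≥ 1), and δ = 1 - 2nθ, then (a₂+1)δ < 1/2 - (n-1)θ if and only if a₃ = 1, equivalently if and only if γ²(θ) > 1/2, where γ is the Gauss map. -/

import Mathlib

/-- If `θ = [2n, a₂, a₃, ...]` is irrational with `n ≥ 1` and `δ = 1 - 2nθ`, then
`(a₂+1)δ < 1/2 - (n-1)θ` iff `a₃ = 1`, equivalently iff `γ²(θ) > 1/2`. -/
theorem stmt10 (θ : ℝ) (hθ : Irrational θ) (h0 : 0 < θ) (h1 : θ < 1)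
    (n a2 : ℕ) (hn : 1 ≤ n) (ha2pos : 1 ≤ a2)
    (ha1 : ⌊1/θ⌋ = 2 * (n : ℤ)) (ha2 : ⌊1 / Int.fract (1/θ)⌋ = (a2 : ℤ))
    (δ : ℝ) (hδ : δ = 1 - 2*(n:ℝ)*θ)
    (γ2 : ℝ) (hγ2 : γ2 = Int.fract (1 / Int.fract (1/θ))) :
    (((a2:ℝ)+1)*δ < 1/2 - ((n:ℝ) - 1)*θ ↔ ⌊1/γ2⌋ = 1) ∧
      (((a2:ℝ)+1)*δ < 1/2 - ((n:ℝ) - 1)*θ ↔ 1/2 < γ2) := by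
  have hθne : θ ≠ 0 := ne_of_gt h0
  have hinv : Irrational (1/θ) := by rw [one_div]; exact hθ.inv
  have hf1irr : Irrational (Int.fract (1/θ)) := by
    rw [Int.fract]; exact hinv.sub_intCast _
  -- δ > 0
  have h2n : 2*(n:ℝ) < 1/θ := by
    rcases lt_or_eq_of_le (Int.floor_le (1/θ)) with h | h
    · rw [ha1] at h; push_cast at h; linarith
    · exact absurd h.symm (hinv.ne_int _)
  have hδpos : 0 < δ := by
    rw [hδ]
    have := (lt_div_iff₀ h0).mp h2n
    linarith
  have hδne : δ ≠ 0 := ne_of_gt hδpos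
  -- fract(1/θ) = δ/θ
  have hf1eq : Int.fract (1/θ) = δ/θ := by
    rw [Int.fract, ha1, hδ]
    push_cast
    field_simp
  have hf1pos : 0 < Int.fract (1/θ) := by rw [hf1eq]; positivity
  -- 1/fract(1/θ) = θ/δ
  have hinv2 : 1 / Int.fract (1/θ) = θ/δ := by rw [hf1eq, one_div_div]
  have hinv2irr : Irrational (1 / Int.fract (1/θ)) := by
    rw [one_div]; exact hf1irr.inv
  have hγ2eq : γ2 = θ/δ - (a2:ℝ) := by
    rw [hγ2, Int.fract, ha2, hinv2]; push_cast; ring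
  have hkey : γ2 * δ = θ - (a2:ℝ) * δ := by
    rw [hγ2eq]; field_simp
  -- γ2 ∈ (0,1)
  have hγ2pos : 0 < γ2 := by
    rw [hγ2]
    exact Int.fract_pos.mpr (hinv2irr.ne_int _)
  have hγ2lt1 : γ2 < 1 := by rw [hγ2]; exact Int.fract_lt_one _
  -- second iff
  have iff2 : (((a2:ℝ)+1)*δ < 1/2 - ((n:ℝ) - 1)*θ ↔ 1/2 < γ2) := by
    constructor <;> intro h
    · have h2 : (1/2)*δ < γ2*δ := by rw [hkey]; linarith
      exact (mul_lt_mul_iff_left₀ hδpos).mp h2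
    · have h2 : (1/2)*δ < γ2*δ := (mul_lt_mul_iff_left₀ hδpos).mpr h
      rw [hkey] at h2
      linarith
  refine ⟨iff2.trans ?_, iff2⟩
  constructor
  · intro h
    have h1' : 1 < 1/γ2 := (one_lt_div hγ2pos).mpr hγ2lt1
    have h2' : 1/γ2 < 2 := by
      rw [div_lt_iff₀ hγ2pos]; linarith
    rw [Int.floor_eq_iff]
    constructor <;> push_cast <;> linarith
  · intro h
    have := Int.floor_eq_iff.mp h
    push_cast at this
    have h2' : 1/γ2 < 2 := by linarith [this.2]
    rw [div_lt_iff₀ hγ2pos] at h2'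
    linarith
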